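/- Let p be an odd prime and let G be a pC p-group with the Ω1-extension property, so that H^*(G; F_p) ≅ F_p[ζ_1,…,ζ_n] ⊗ C^* with C^* finite-dimensional, n = rank of Ω1(G), and the ζ_i degree-2 classes restricting to generators of H^2(Ω1(G); F_p)_red. If η_1,…,η_n is any other regular sequence of degree-2 elements of H^*(G; F_p) whose restrictions generate H^2(Ω1(G); F_p)_red, then there is a graded algebra automorphism of H^*(G; F_p) carrying the ideal (ζ_1,…,ζ_n) to (η_1,…,η_n); consequently H^*(G; F_p)/(η_1,…,η_n) ≅ C^* and H^*(G; F_p) ≅ F_p[η_1,…,η_n] ⊗ C^* as graded F_p-algebras. -/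

import Mathlib

open scoped TensorProduct

/-!
STATEMENT 8.  Let `G` be a `pC` `p`-group with the `Ω₁`-extension property, with a
Weigel decomposition `H^*(G;𝔽_p) ≅ 𝔽_p[ζ_1,…,ζ_n] ⊗ C^*` (`C^*` finite-dimensional,
`n = rank Ω₁(G)`, the `ζ_i` of degree 2 restricting to generators of
`H²(Ω₁(G);𝔽_p)_red`).  If `η_1,…,η_n` is any other regular sequence of degree-2
elements whose restrictions generate `H²(Ω₁(G);𝔽_p)_red`, then there is a graded
algebra automorphism of `H^*(G;𝔽_p)` carrying the ideal `(ζ_1,…,ζ_n)` to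
`(η_1,…,η_n)`; consequently `H^*(G;𝔽_p)/(η_1,…,η_n) ≅ C^*` and
`H^*(G;𝔽_p) ≅ 𝔽_p[η_1,…,η_n] ⊗ C^*` as graded algebras.
-/

/-- A model of the mod `p` cohomology ring of `G`. -/
def IsModPCohomologyOf (p : ℕ) (G : Type) [Group G]
    (A : Type) [Ring A] [Algebra (ZMod p) A] (𝒜 : ℕ → Submodule (ZMod p) A)
    [GradedAlgebra 𝒜] : Prop :=
  (∀ m n : ℕ, ∀ a ∈ 𝒜 m, ∀ b ∈ 𝒜 n, a * b = ((-1 : ZMod p)) ^ (m * n) • (b * a)) ∧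
  ∀ n : ℕ, Nonempty
    ((𝒜 n) ≃ₗ[ZMod p] (groupCohomology (Rep.trivial (ZMod p) G (ZMod p)) n))

/-- `ζ_1, …, ζ_n` is a regular sequence in `A`. -/
def IsRegularSequence {A : Type} [Ring A] {n : ℕ} (ζ : Fin n → A) : Prop :=
  ∀ i : Fin n, ∀ a : A,
    a * ζ i ∈ Ideal.span (ζ '' {j | j < i}) → a ∈ Ideal.span (ζ '' {j | j < i})

/-- `H^*((ℤ/p)^n;𝔽_p) = Λ(e_1,…,e_n) ⊗ 𝔽_p[b_1,…,b_n]` (for `p` odd). -/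
noncomputable abbrev ElemAbelianCohomology (p n : ℕ) : Type :=
  (ExteriorAlgebra (ZMod p) (Fin n → ZMod p)) ⊗[ZMod p] (MvPolynomial (Fin n) (ZMod p))

/-- The degree `k` part of `Λ(e_1,…,e_n) ⊗ 𝔽_p[b_1,…,b_n]` (`|e_i| = 1`, `|b_i| = 2`). -/
noncomputable def elemAbelianGrade (p n k : ℕ) :
    Submodule (ZMod p) (ElemAbelianCohomology p n) :=
  ⨆ (ab : ℕ × ℕ) (_ : ab.1 + 2 * ab.2 = k),
    LinearMap.range (TensorProduct.map
      (⋀[ZMod p]^ab.1 (Fin n → ZMod p)).subtype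
      (MvPolynomial.homogeneousSubmodule (Fin n) (ZMod p) ab.2).subtype)

/-- The reduced quotient `(Λ(e) ⊗ 𝔽_p[b])_red = 𝔽_p[b_1,…,b_n]`. -/
noncomputable def elemAbelianRed (p n : ℕ) :
    ElemAbelianCohomology p n →ₐ[ZMod p] MvPolynomial (Fin n) (ZMod p) :=
  (Algebra.TensorProduct.lid (ZMod p) (MvPolynomial (Fin n) (ZMod p))).toAlgHom.comp
    (Algebra.TensorProduct.map (ExteriorAlgebra.algebraMapInv) (AlgHom.id _ _))




section Aux

lemma finsupp_sum_eq_zero' {n : ℕ} (m : Fin n →₀ ℕ) (h : (m.sum fun _ e => e) = 0) : m = 0 := by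
  classical
  ext i
  by_cases hi : i ∈ m.support
  · have hle := Finset.single_le_sum (f := fun i => m i) (fun _ _ => Nat.zero_le _) hi
    rw [Finsupp.sum] at h
    simpa [h] using hle
  · simpa using Finsupp.notMem_support_iff.mp hi

lemma finsupp_sum_eq_one' {n : ℕ} (m : Fin n →₀ ℕ) (h : (m.sum fun _ e => e) = 1) :
    ∃ i, m = Finsupp.single i 1 := by
  classical
  have hne : m.support.Nonempty := by
    rcases Finset.eq_empty_or_nonempty m.support with he | hne
    · exfalso; rw [Finsupp.sum, he] at h; simp at h
    · exact hne
  obtain ⟨i, hi⟩ := hne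
  refine ⟨i, ?_⟩
  have hle := Finset.single_le_sum (f := fun i => m i) (fun _ _ => Nat.zero_le _) hi
  rw [Finsupp.sum] at h
  have hmi : m i = 1 := le_antisymm (h ▸ hle)
    (Nat.one_le_iff_ne_zero.mpr (Finsupp.mem_support_iff.mp hi))
  ext j
  by_cases hj : j = i
  · subst hj; simp [hmi]
  · simp only [Finsupp.single_apply, if_neg (Ne.symm hj)]
    by_contra hmj
    have hjs : j ∈ m.support := Finsupp.mem_support_iff.mpr hmj
    have hsub : ({i, j} : Finset (Fin n)) ⊆ m.support := by
      intro x hx; simp at hx; rcases hx with rfl|rfl; exacts [hi, hjs]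
    have hpair : m i + m j ≤ ∑ x ∈ m.support, m x := by
      calc m i + m j = ∑ x ∈ ({i, j} : Finset (Fin n)), m x := by
            rw [Finset.sum_pair (Ne.symm hj)]
        _ ≤ ∑ x ∈ m.support, m x := Finset.sum_le_sum_of_subset hsub
    omega

lemma grade_le_of_iSup_eq_top {R A : Type*} [CommSemiring R] [Semiring A] [Algebra R A]
    (𝒜 : ℕ → Submodule R A) [GradedAlgebra 𝒜] (S : ℕ → Submodule R A)
    (hle : ∀ k, S k ≤ 𝒜 k) (htop : ⨆ k, S k = ⊤) (k : ℕ) : 𝒜 k ≤ S k := by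
  intro a ha
  have hmem : a ∈ ⨆ k, S k := htop.symm ▸ Submodule.mem_top
  have key : (DirectSum.decompose 𝒜 a k : A) ∈ S k := by
    refine Submodule.iSup_induction S
      (motive := fun x => (DirectSum.decompose 𝒜 x k : A) ∈ S k) hmem ?_ (by simp) ?_
    · intro j x hx
      by_cases hjk : j = k
      · subst hjk; rw [DirectSum.decompose_of_mem_same 𝒜 (hle j hx)]; exact hx
      · rw [DirectSum.decompose_of_mem_ne 𝒜 (hle j hx) hjk]; simp
    · intro x y hx hy
      have : DirectSum.decompose 𝒜 (x + y) k = DirectSum.decompose 𝒜 x k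
          + DirectSum.decompose 𝒜 y k := by rw [DirectSum.decompose_add]; rfl
      rw [this]
      exact Submodule.add_mem _ hx hy
  rwa [DirectSum.decompose_of_mem_same 𝒜 ha] at key

open MvPolynomial in
noncomputable def deg1To (R : Type*) [CommSemiring R] (n : ℕ) :
    (homogeneousSubmodule (Fin n) R 1) →ₗ[R] (Fin n → R) where
  toFun q := fun i => coeff (Finsupp.single i 1) (q : MvPolynomial (Fin n) R)
  map_add' x y := by ext i; simp
  map_smul' r x := by ext i; simp

open MvPolynomial in
noncomputable def deg1From (R : Type*) [CommSemiring R] (n : ℕ) :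
    (Fin n → R) →ₗ[R] (homogeneousSubmodule (Fin n) R 1) where
  toFun v := ⟨∑ i, MvPolynomial.C (v i) * X i, by
    rw [mem_homogeneousSubmodule]
    apply MvPolynomial.IsHomogeneous.sum
    intro i _
    simpa using (isHomogeneous_C (Fin n) (v i)).mul (isHomogeneous_X R i)⟩
  map_add' x y := Subtype.ext (by
    simp only [Submodule.coe_add]
    rw [← Finset.sum_add_distrib]
    exact Finset.sum_congr rfl fun i _ => by rw [Pi.add_apply, C_add, add_mul])
  map_smul' r x := Subtype.ext (by
    simp only [SetLike.val_smul, Finset.smul_sum]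
    exact Finset.sum_congr rfl fun i _ => by
      rw [Pi.smul_apply, smul_eq_mul, C_mul, RingHom.id_apply, MvPolynomial.smul_eq_C_mul,
        mul_assoc])

open MvPolynomial in
lemma deg1_to_from (R : Type*) [CommSemiring R] (n : ℕ) (v : Fin n → R) :
    deg1To R n (deg1From R n v) = v := by
  classical
  ext i
  simp only [deg1To, deg1From, LinearMap.coe_mk, AddHom.coe_mk, coeff_sum, coeff_C_mul, coeff_X']
  rw [Finset.sum_eq_single i]
  · simp
  · intro j _ hji
    rw [if_neg, mul_zero]
    intro hh
    exact hji ((Finsupp.single_left_inj (one_ne_zero (α := ℕ))).mp hh)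
  · intro h; exact absurd (Finset.mem_univ i) h

open MvPolynomial in
lemma deg1_from_to (R : Type*) [CommSemiring R] (n : ℕ)
    (q : homogeneousSubmodule (Fin n) R 1) :
    deg1From R n (deg1To R n q) = q := by
  classical
  obtain ⟨q, hq⟩ := q
  rw [mem_homogeneousSubmodule] at hq
  ext : 1
  simp only [deg1From, deg1To, LinearMap.coe_mk, AddHom.coe_mk]
  apply MvPolynomial.ext
  intro d
  rw [coeff_sum]
  simp only [coeff_C_mul, coeff_X']
  by_cases hd : d.degree = 1
  · have : (d.sum fun _ e => e) = 1 := by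
      simpa [Finsupp.degree_apply, Finsupp.sum] using hd
    obtain ⟨i, rfl⟩ := finsupp_sum_eq_one' d this
    rw [Finset.sum_eq_single i]
    · simp
    · intro j _ hji
      rw [if_neg, mul_zero]
      intro hh
      exact hji ((Finsupp.single_left_inj (one_ne_zero (α := ℕ))).mp hh)
    · intro h; exact absurd (Finset.mem_univ i) h
  · rw [hq.coeff_eq_zero hd]
    apply Finset.sum_eq_zero
    intro j _
    rw [if_neg, mul_zero]
    intro hh
    apply hd
    rw [← hh, Finsupp.degree_apply]
    rw [Finsupp.support_single_ne_zero _ (one_ne_zero)]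
    simp

noncomputable def deg1Equiv (R : Type*) [CommSemiring R] (n : ℕ) :
    (MvPolynomial.homogeneousSubmodule (Fin n) R 1) ≃ₗ[R] (Fin n → R) :=
  LinearEquiv.ofLinear (deg1To R n) (deg1From R n)
    (LinearMap.ext fun v => deg1_to_from R n v)
    (LinearMap.ext fun q => deg1_from_to R n q)

end Aux

-- ===== auxiliary lemmas about the statement's definitions =====
lemma elemAbelianRed_tmul (p n : ℕ) (x : ExteriorAlgebra (ZMod p) (Fin n → ZMod p))
    (y : MvPolynomial (Fin n) (ZMod p)) :
    elemAbelianRed p n (x ⊗ₜ[ZMod p] y) = ExteriorAlgebra.algebraMapInv x • y := by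
  simp [elemAbelianRed, Algebra.TensorProduct.lid_tmul]

lemma red_grade_two_mem (p n : ℕ) (x : ElemAbelianCohomology p n)
    (hx : x ∈ elemAbelianGrade p n 2) :
    elemAbelianRed p n x ∈ MvPolynomial.homogeneousSubmodule (Fin n) (ZMod p) 1 := by
  classical
  refine Submodule.iSup_induction _ (motive := fun x =>
    elemAbelianRed p n x ∈ MvPolynomial.homogeneousSubmodule (Fin n) (ZMod p) 1) hx ?_ (by simp) ?_
  · rintro ⟨a, b⟩ x hx
    by_cases hab : a + 2 * b = 2
    · rw [iSup_pos hab] at hx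
      obtain ⟨t, rfl⟩ := hx
      induction t with
      | zero => rw [LinearMap.map_zero, map_zero]; simp
      | tmul u v =>
        rw [TensorProduct.map_tmul, elemAbelianRed_tmul]
        have hcase : (a = 0 ∧ b = 1) ∨ (a = 2 ∧ b = 0) := by omega
        rcases hcase with ⟨ha, hb⟩ | ⟨ha, hb⟩
        · subst ha; subst hb
          exact Submodule.smul_mem _ _ (by simpa using v.2)
        · subst ha; subst hb
          have : ExteriorAlgebra.algebraMapInv
              (u : ExteriorAlgebra (ZMod p) (Fin n → ZMod p)) = 0 := by
            have hu : (u : ExteriorAlgebra (ZMod p) (Fin n → ZMod p)) ∈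
                (LinearMap.range (ExteriorAlgebra.ι (ZMod p)) : Submodule (ZMod p) _) ^ 2 := u.2
            rw [pow_two] at hu
            refine Submodule.mul_induction_on hu ?_ ?_
            · rintro m ⟨m', rfl⟩ n' ⟨n'', rfl⟩
              rw [map_mul]
              have : ExteriorAlgebra.algebraMapInv (ExteriorAlgebra.ι (ZMod p) m') = 0 := by
                simp [ExteriorAlgebra.algebraMapInv]
              rw [this, zero_mul]
            · intro x y hx hy; rw [map_add, hx, hy, add_zero]
          rw [Submodule.subtype_apply, this, zero_smul]
          simp
      | add u v hu hv =>
        rw [LinearMap.map_add, map_add]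
        exact Submodule.add_mem _ hu hv
    · rw [iSup_neg hab] at hx
      simp only [Submodule.mem_bot] at hx
      simp [hx]
  · intro x y hx hy
    rw [map_add]
    exact Submodule.add_mem _ hx hy

set_option maxHeartbeats 3200000 in
set_option synthInstance.maxHeartbeats 1000000 in
theorem weigel_decomposition_change_of_regular_sequence
    (p n : ℕ) [Fact p.Prime] (hodd : Odd p)
    (G : Type) [Group G] [Finite G] (hG : IsPGroup p G)
    (hpC : ∀ g : G, orderOf g = p → g ∈ Subgroup.center G)
    (Ω₁ : Subgroup G) (hΩ : ∀ g : G, g ∈ Ω₁ ↔ g ^ p = 1)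
    (hrank : Nonempty (Ω₁ ≃* Multiplicative (Fin n → ZMod p)))
    (A : Type) [Ring A] [Algebra (ZMod p) A]
    (𝒜 : ℕ → Submodule (ZMod p) A) [GradedAlgebra 𝒜]
    (hA : IsModPCohomologyOf p G A 𝒜)
    (res : A →ₐ[ZMod p] ElemAbelianCohomology p n)
    (hres : ∀ k : ℕ, ∀ a ∈ 𝒜 k, res a ∈ elemAbelianGrade p n k)
    -- the given Weigel decomposition `H^*(G;𝔽_p) = 𝔽_p[ζ_1,…,ζ_n] ⊗ C^*`
    (C : Subalgebra (ZMod p) A) (hC : FiniteDimensional (ZMod p) C)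
    (hCgr : C.toSubmodule = ⨆ k : ℕ, C.toSubmodule ⊓ 𝒜 k)
    (e : (MvPolynomial (Fin n) (ZMod p)) ⊗[ZMod p] C ≃ₐ[ZMod p] A)
    (he : ∀ c : C, e ((1 : MvPolynomial (Fin n) (ZMod p)) ⊗ₜ[ZMod p] c) = ↑c)
    (ζ : Fin n → A) (hζ : ∀ i, ζ i = e ((MvPolynomial.X i) ⊗ₜ[ZMod p] (1 : C)))
    (hζdeg : ∀ i, ζ i ∈ 𝒜 2)
    (hζres : Submodule.span (ZMod p) (Set.range fun i => elemAbelianRed p n (res (ζ i)))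
      = MvPolynomial.homogeneousSubmodule (Fin n) (ZMod p) 1)
    -- another regular sequence of degree-2 elements whose restrictions generate
    -- `H²(Ω₁(G);𝔽_p)_red`
    (η : Fin n → A) (hηdeg : ∀ i, η i ∈ 𝒜 2) (hηreg : IsRegularSequence η)
    (hηres : Submodule.span (ZMod p) (Set.range fun i => elemAbelianRed p n (res (η i)))
      = MvPolynomial.homogeneousSubmodule (Fin n) (ZMod p) 1) :
    -- conclusion: a graded algebra automorphism carrying `(ζ)` to `(η)` …
    (∃ Ψ : A ≃ₐ[ZMod p] A,
      (∀ k : ℕ, Submodule.map Ψ.toLinearMap (𝒜 k) = 𝒜 k) ∧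
      Submodule.map Ψ.toLinearMap
          (Submodule.restrictScalars (ZMod p) (Ideal.span (Set.range ζ)))
        = Submodule.restrictScalars (ZMod p) (Ideal.span (Set.range η))) ∧
    -- … consequently `H^*(G;𝔽_p)/(η_1,…,η_n) ≅ C^*` …
    Nonempty ((A ⧸ Submodule.restrictScalars (ZMod p) (Ideal.span (Set.range η)))
      ≃ₗ[ZMod p] C) ∧
    -- … and `H^*(G;𝔽_p) ≅ 𝔽_p[η_1,…,η_n] ⊗ C^*`
    (∃ e' : (MvPolynomial (Fin n) (ZMod p)) ⊗[ZMod p] C ≃ₐ[ZMod p] A,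
      (∀ c : C, e' ((1 : MvPolynomial (Fin n) (ZMod p)) ⊗ₜ[ZMod p] c) = ↑c) ∧
      (∀ i : Fin n, e' ((MvPolynomial.X i) ⊗ₜ[ZMod p] (1 : C)) = η i)) := by
  classical
  obtain ⟨hcomm, hdim⟩ := hA
  set L : A →ₐ[ZMod p] MvPolynomial (Fin n) (ZMod p) := (elemAbelianRed p n).comp res with hLdef
  have hL2 : ∀ x ∈ 𝒜 2, L x ∈ MvPolynomial.homogeneousSubmodule (Fin n) (ZMod p) 1 :=
    fun x hx => red_grade_two_mem p n _ (hres 2 x hx)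
  -- every element of `𝒜 2` is central
  have htopA : ∀ b : A, b ∈ ⨆ k, 𝒜 k := by
    intro b
    rw [(DirectSum.Decomposition.isInternal 𝒜).submodule_iSup_eq_top]
    trivial
  have hcen2 : ∀ x ∈ 𝒜 2, x ∈ Subalgebra.center (ZMod p) A := by
    intro x hx
    rw [Subalgebra.mem_center_iff]
    intro b
    refine Submodule.iSup_induction _ (motive := fun b => b * x = x * b) (htopA b) ?_ (by simp) ?_
    · intro j y hy
      have h := hcomm 2 j x hx y hy
      have hpow : ((-1 : ZMod p)) ^ (2 * j) = 1 := by
        rw [pow_mul]; simp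
      rw [h, hpow, one_smul]
    · intro y z hy hz
      rw [add_mul, mul_add, hy, hz]
  -- substitution algebra maps
  set Zc := Subalgebra.center (ZMod p) A with hZcdef
  set mk : (Fin n → Zc) → (MvPolynomial (Fin n) (ZMod p) →ₐ[ZMod p] A) := fun w =>
    Zc.val.comp (MvPolynomial.aeval w) with hmkdef
  have hmkX : ∀ w i, mk w (MvPolynomial.X i) = ↑(w i) := by intro w i; simp [hmkdef]
  have hmk_center : ∀ w q, mk w q ∈ Zc := fun w q => (MvPolynomial.aeval w q).2
  set ζc : Fin n → Zc := fun i => ⟨ζ i, hcen2 _ (hζdeg i)⟩ with hζcdef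
  set ηc : Fin n → Zc := fun i => ⟨η i, hcen2 _ (hηdeg i)⟩ with hηcdef
  -- `e` on pure tensors
  have hEz : (e.toAlgHom.comp Algebra.TensorProduct.includeLeft :
      MvPolynomial (Fin n) (ZMod p) →ₐ[ZMod p] A) = mk ζc := by
    apply MvPolynomial.algHom_ext
    intro i
    show e ((MvPolynomial.X i) ⊗ₜ[ZMod p] (1 : C)) = mk ζc (MvPolynomial.X i)
    rw [hmkX, ← hζ i]
  have hePQ : ∀ (q : MvPolynomial (Fin n) (ZMod p)) (c : C),
      e (q ⊗ₜ[ZMod p] c) = mk ζc q * ↑c := by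
    intro q c
    have hsplit : (q ⊗ₜ[ZMod p] c : MvPolynomial (Fin n) (ZMod p) ⊗[ZMod p] C) =
        (q ⊗ₜ[ZMod p] (1 : C)) * ((1 : MvPolynomial (Fin n) (ZMod p)) ⊗ₜ[ZMod p] c) := by
      rw [Algebra.TensorProduct.tmul_mul_tmul, mul_one, one_mul]
    rw [hsplit, map_mul, he c]
    congr 1
    exact DFunLike.congr_fun hEz q
  -- monomial products
  set Pm : (Fin n → Zc) → (Fin n →₀ ℕ) → A :=
    fun w m => mk w (MvPolynomial.monomial m 1) with hPmdef
  have hPmdeg : ∀ (w : Fin n → Zc), (∀ i, (w i : A) ∈ 𝒜 2) → ∀ m : Fin n →₀ ℕ,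
      Pm w m ∈ 𝒜 (2 * (m.sum fun _ e => e)) := by
    intro w hw m
    have hPmval : Pm w m = ((m.prod fun i k => w i ^ k : Zc) : A) := by
      rw [hPmdef]
      show Zc.val (MvPolynomial.aeval w (MvPolynomial.monomial m 1)) = _
      rw [MvPolynomial.aeval_monomial, map_one, one_mul]
      rfl
    rw [hPmval]
    clear hPmval
    induction m using Finsupp.induction with
    | zero =>
      have : ((Finsupp.prod 0 fun i k => w i ^ k : Zc) : A) = 1 := by
        rw [Finsupp.prod_zero_index]; rfl
      rw [this]
      have hz : (2 * ((0 : Fin n →₀ ℕ).sum fun _ e => e)) = 0 := by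
        rw [Finsupp.sum_zero_index, Nat.mul_zero]
      rw [hz]
      exact SetLike.one_mem_graded 𝒜
    | single_add a b m' ham' hb ih =>
      have hprod : ((Finsupp.prod (Finsupp.single a b + m') fun i k => w i ^ k : Zc) : A)
          = ((w a : A) ^ b) * ((Finsupp.prod m' fun i k => w i ^ k : Zc) : A) := by
        rw [Finsupp.prod_add_index' (fun i => pow_zero (w i)) (fun i k1 k2 => pow_add (w i) k1 k2),
          Finsupp.prod_single_index (h := fun i k => w i ^ k) (pow_zero (w a))]
        push_cast
        rfl
      have hsum : (2 * ((Finsupp.single a b + m').sum fun _ e => e))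
          = 2 * b + 2 * (m'.sum fun _ e => e) := by
        rw [Finsupp.sum_add_index' (fun i => rfl) (fun i k1 k2 => rfl),
          Finsupp.sum_single_index (h := fun _ e => e) rfl, Nat.mul_add]
      rw [hprod, hsum]
      have hpow : (w a : A) ^ b ∈ 𝒜 (2 * b) := by
        have h2 := SetLike.pow_mem_graded b (hw a)
        rwa [smul_eq_mul, Nat.mul_comm] at h2
      exact SetLike.mul_mem_graded hpow ih
  have hmk_monomial : ∀ (w : Fin n → Zc) (m : Fin n →₀ ℕ) (r : ZMod p),
      mk w (MvPolynomial.monomial m r) = r • Pm w m := by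
    intro w m r
    have h1 : (MvPolynomial.monomial m r : MvPolynomial (Fin n) (ZMod p))
        = r • MvPolynomial.monomial m 1 := by
      rw [MvPolynomial.smul_monomial, smul_eq_mul, mul_one]
    show mk w (MvPolynomial.monomial m r) = r • mk w (MvPolynomial.monomial m 1)
    rw [h1]
    exact map_smul (mk w).toLinearMap r _
  -- graded pieces are spanned by products of `ζ`'s and homogeneous elements of `C`
  set S' : ℕ → Submodule (ZMod p) A := fun k => Submodule.span (ZMod p)
    {x : A | ∃ (m : Fin n →₀ ℕ) (j : ℕ) (c : A), c ∈ C ∧ c ∈ 𝒜 j ∧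
      2 * (m.sum fun _ e => e) + j = k ∧ x = Pm ζc m * c} with hS'def
  have hS'le : ∀ k, S' k ≤ 𝒜 k := by
    intro k
    rw [hS'def, Submodule.span_le]
    rintro x ⟨m, j, c, hcC, hcj, hk, rfl⟩
    have h := SetLike.mul_mem_graded (hPmdeg ζc (fun i => hζdeg i) m) hcj
    rwa [hk] at h
  have hS'top : ⨆ k, S' k = ⊤ := by
    rw [eq_top_iff]
    rintro a -
    obtain ⟨t, rfl⟩ := e.surjective a
    induction t using TensorProduct.induction_on with
    | zero => rw [map_zero]; exact Submodule.zero_mem _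
    | add x y hx hy => rw [map_add]; exact Submodule.add_mem _ hx hy
    | tmul q c =>
      rw [hePQ q c]
      have hq : mk ζc q * ↑c =
          ∑ m ∈ q.support, mk ζc (MvPolynomial.monomial m (MvPolynomial.coeff m q)) * ↑c := by
        rw [← Finset.sum_mul, ← map_sum, MvPolynomial.support_sum_monomial_coeff]
      rw [hq]
      refine Submodule.sum_mem _ ?_
      intro m _
      rw [hmk_monomial, smul_mul_assoc]
      refine Submodule.smul_mem _ _ ?_
      have hcC : (c : A) ∈ C.toSubmodule := c.2
      rw [hCgr] at hcC
      refine Submodule.iSup_induction _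
        (motive := fun y => (Pm ζc m) * y ∈ ⨆ k, S' k) hcC ?_ (by simp) ?_
      · intro j y hy
        refine Submodule.mem_iSup_of_mem (2 * (m.sum fun _ e => e) + j) ?_
        refine Submodule.subset_span ?_
        exact ⟨m, j, y, hy.1, hy.2, rfl, rfl⟩
      · intro x y hx hy
        rw [mul_add]
        exact Submodule.add_mem _ hx hy
  have hgr : ∀ k, 𝒜 k = S' k :=
    fun k => le_antisymm (grade_le_of_iSup_eq_top 𝒜 S' hS'le hS'top k) (hS'le k)
  -- `𝒜 0` is one-dimensional
  have h𝒜0 : ∀ x ∈ 𝒜 0, ∃ r : ZMod p, x = r • (1 : A) := by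
    obtain ⟨φ0⟩ := hdim 0
    let φ : (𝒜 0) ≃ₗ[ZMod p] ZMod p := φ0.trans
      ((groupCohomology.H0IsoOfIsTrivial (Rep.trivial (ZMod p) G (ZMod p))).toLinearEquiv)
    intro x hx
    by_cases h1 : (1 : A) = 0
    · exact ⟨0, by rw [zero_smul, ← mul_one x, h1, mul_zero]⟩
    · have h1m : (1 : A) ∈ 𝒜 0 := SetLike.one_mem_graded 𝒜
      set u := φ ⟨1, h1m⟩ with hudef
      have hu : u ≠ 0 := by
        intro h
        apply h1
        have h2 : (⟨1, h1m⟩ : 𝒜 0) = 0 := by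
          apply φ.injective
          rw [← hudef, h, map_zero]
        exact congrArg Subtype.val h2
      refine ⟨φ ⟨x, hx⟩ * u⁻¹, ?_⟩
      have h3 : (⟨x, hx⟩ : 𝒜 0) = (φ ⟨x, hx⟩ * u⁻¹) • ⟨1, h1m⟩ := by
        apply φ.injective
        rw [map_smul, smul_eq_mul, ← hudef, mul_assoc, inv_mul_cancel₀ hu, mul_one]
      exact congrArg Subtype.val h3
  -- `L` kills homogeneous degree-2 elements of `C`
  have hLC2 : ∀ x : A, x ∈ C.toSubmodule ⊓ 𝒜 2 → L x = 0 := by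
    intro x hx
    have hnilp : IsNilpotent x := by
      by_contra hcon
      rw [IsNilpotent] at hcon
      push_neg at hcon
      have hpow2 : ∀ k : ℕ, x ^ k ∈ 𝒜 (2 * k) := by
        intro k
        have h := SetLike.pow_mem_graded k hx.2
        rwa [smul_eq_mul, Nat.mul_comm] at h
      have hxC : ∀ k : ℕ, x ^ k ∈ C := fun k =>
        Subalgebra.pow_mem C ((Subalgebra.mem_toSubmodule C).mp hx.1) k
      have hli : LinearIndependent (ZMod p) (fun k : ℕ => (⟨x ^ k, hxC k⟩ : C)) := by
        rw [linearIndependent_iff']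
        intro t l hsum k0 hk0
        have hsumA : ∑ k ∈ t, l k • x ^ k = 0 := by
          have h := congrArg (Subtype.val) hsum
          push_cast at h
          simpa using h
        have hproj := congrArg (GradedRing.proj 𝒜 (2 * k0)) hsumA
        rw [map_sum, map_zero] at hproj
        have hterms : ∀ k ∈ t, GradedRing.proj 𝒜 (2 * k0) (l k • x ^ k) =
            if k = k0 then l k • x ^ k else 0 := by
          intro k _
          have hmem : l k • x ^ k ∈ 𝒜 (2 * k) := Submodule.smul_mem _ _ (hpow2 k)
          by_cases hk : k = k0
          · subst hk
            rw [if_pos rfl, GradedRing.proj_apply, DirectSum.decompose_of_mem_same 𝒜 hmem]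
          · rw [if_neg hk, GradedRing.proj_apply,
              DirectSum.decompose_of_mem_ne 𝒜 hmem (by omega)]
        rw [Finset.sum_congr rfl hterms, Finset.sum_ite_eq' t k0 (fun k => l k • x ^ k),
          if_pos hk0] at hproj
        rcases smul_eq_zero.mp hproj with h | h
        · exact h
        · exact absurd h (hcon k0)
      haveI : Module.Finite (ZMod p) C := hC
      have hfin : Finite ℕ := hli.finite
      exact not_finite ℕ
    obtain ⟨k, hk⟩ := hnilp
    have hLnil : IsNilpotent (L x) := ⟨k, by rw [← map_pow, hk, map_zero]⟩
    exact hLnil.eq_zero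
  -- decompose `𝒜 2`
  have h𝒜2 : 𝒜 2 ≤ Submodule.span (ZMod p) (Set.range ζ) ⊔ (C.toSubmodule ⊓ 𝒜 2) := by
    refine le_trans (le_of_eq (hgr 2)) ?_
    rw [hS'def, Submodule.span_le]
    rintro x ⟨m, j, c, hcC, hcj, hk, rfl⟩
    rcases (show (m.sum fun _ e => e) = 0 ∧ j = 2 ∨ (m.sum fun _ e => e) = 1 ∧ j = 0 by
      omega) with ⟨hm, hj⟩ | ⟨hm, hj⟩
    · have hm0 : m = 0 := finsupp_sum_eq_zero' m hm
      subst hm0; subst hj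
      have hP1 : Pm ζc 0 = 1 := by
        rw [hPmdef]
        show mk ζc (MvPolynomial.monomial 0 1) = 1
        rw [MvPolynomial.monomial_zero', MvPolynomial.C_1, map_one]
      rw [hP1, one_mul]
      exact Submodule.mem_sup_right (Submodule.mem_inf.mpr ⟨hcC, hcj⟩)
    · obtain ⟨i, rfl⟩ := finsupp_sum_eq_one' m hm
      subst hj
      obtain ⟨r, rfl⟩ := h𝒜0 c hcj
      have hPm1 : Pm ζc (Finsupp.single i 1) = ζ i := by
        rw [hPmdef]
        show mk ζc (MvPolynomial.monomial (Finsupp.single i 1) 1) = ζ i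
        rw [← MvPolynomial.X, hmkX]
      rw [hPm1, mul_smul_comm, mul_one]
      exact Submodule.mem_sup_left
        (Submodule.smul_mem _ _ (Submodule.subset_span ⟨i, rfl⟩))
  have hdec : ∀ i, ∃ sv ∈ Submodule.span (ZMod p) (Set.range ζ),
      ∃ cv ∈ C.toSubmodule ⊓ 𝒜 2, sv + cv = η i :=
    fun i => Submodule.mem_sup.mp (h𝒜2 (hηdeg i))
  choose s hs cf hcf hscf using hdec
  -- linear algebra in degree 1
  haveI hVfd : FiniteDimensional (ZMod p)
      (MvPolynomial.homogeneousSubmodule (Fin n) (ZMod p) 1) :=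
    Module.Finite.equiv (deg1Equiv (ZMod p) n).symm
  have hfr : Module.finrank (ZMod p)
      (MvPolynomial.homogeneousSubmodule (Fin n) (ZMod p) 1) = n := by
    rw [(deg1Equiv (ZMod p) n).finrank_eq]
    simp
  set bb : Fin n → (MvPolynomial.homogeneousSubmodule (Fin n) (ZMod p) 1) :=
    fun i => ⟨L (ζ i), hL2 _ (hζdeg i)⟩ with hbbdef
  set uu : Fin n → (MvPolynomial.homogeneousSubmodule (Fin n) (ZMod p) 1) :=
    fun i => ⟨L (η i), hL2 _ (hηdeg i)⟩ with huudef
  have hspan : ∀ (w : Fin n → A) (hw : ∀ i, w i ∈ 𝒜 2),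
      Submodule.span (ZMod p) (Set.range fun i => elemAbelianRed p n (res (w i))) =
        MvPolynomial.homogeneousSubmodule (Fin n) (ZMod p) 1 →
      Submodule.span (ZMod p) (Set.range fun i => (⟨L (w i), hL2 _ (hw i)⟩ :
        MvPolynomial.homogeneousSubmodule (Fin n) (ZMod p) 1)) = ⊤ := by
    intro w hw hsp
    apply Submodule.map_injective_of_injective (Submodule.injective_subtype _)
    rw [Submodule.map_span, Submodule.map_top, Submodule.range_subtype, ← Set.range_comp]
    exact hsp
  have hbbtop : ⊤ ≤ Submodule.span (ZMod p) (Set.range bb) := (hspan ζ hζdeg hζres).ge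
  set bB : Module.Basis (Fin n) (ZMod p) (MvPolynomial.homogeneousSubmodule (Fin n) (ZMod p) 1) :=
    basisOfTopLeSpanOfCardEqFinrank bb hbbtop (by simp [hfr]) with hbBdef
  have hbB : ∀ i, bB i = bb i := fun i =>
    congrFun (coe_basisOfTopLeSpanOfCardEqFinrank bb _ _) i
  set f := bB.constr (ZMod p) uu with hfdef
  have hfb : ∀ i, f (bB i) = uu i := fun i => bB.constr_basis (ZMod p) uu i
  have hf_surj : Function.Surjective f := by
    rw [← LinearMap.range_eq_top, hfdef, Module.Basis.constr_range]
    exact le_antisymm le_top (hspan η hηdeg hηres).ge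
  set g := LinearEquiv.ofBijective f
    ⟨LinearMap.injective_iff_surjective.mpr hf_surj, hf_surj⟩ with hgdef
  have hgb : ∀ i, g (bB i) = uu i := hfb
  set Z := bB.constr (ZMod p) ζ with hZdef
  have hZb : ∀ i, Z (bB i) = ζ i := fun i => bB.constr_basis (ZMod p) ζ i
  have hLZ : ∀ v, L (Z v) = ↑v := by
    intro v
    have hcomp : (L.toLinearMap ∘ₗ Z) =
        (MvPolynomial.homogeneousSubmodule (Fin n) (ZMod p) 1).subtype := by
      apply Module.Basis.ext bB
      intro i
      simp only [LinearMap.comp_apply, Submodule.subtype_apply]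
      rw [hZb i, hbB i]
      rfl
    exact DFunLike.congr_fun hcomp v
  have hseq : ∀ i, s i = Z (uu i) := by
    intro i
    obtain ⟨v, hv⟩ : ∃ v, Z v = s i := by
      have hr : s i ∈ LinearMap.range Z := by
        rw [hZdef, Module.Basis.constr_range]
        exact hs i
      exact hr
    have h1 : L (s i) = ↑(uu i) := by
      have h2 : L (η i) = L (s i) + L (cf i) := by rw [← hscf i, map_add]
      rw [hLC2 (cf i) (hcf i), add_zero] at h2
      rw [← h2, huudef]
    have h3 : v = uu i := Subtype.ext (by rw [← hLZ v, hv, h1])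
    rw [← hv, h3]
  set W := bB.constr (ZMod p) (fun i => ζ i - cf i) with hWdef
  have hWb : ∀ i, W (bB i) = ζ i - cf i := fun i => bB.constr_basis (ZMod p) _ i
  have hWdeg : ∀ v, W v ∈ 𝒜 2 := by
    intro v
    have hr : LinearMap.range W ≤ 𝒜 2 := by
      rw [hWdef, Module.Basis.constr_range, Submodule.span_le]
      rintro x ⟨i, rfl⟩
      exact Submodule.sub_mem _ (hζdeg i) (hcf i).2
    exact hr ⟨v, rfl⟩
  set ξ : Fin n → A := fun i => W (g.symm (bB i)) with hξdef
  have hξdeg : ∀ i, ξ i ∈ 𝒜 2 := fun i => hWdeg _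
  set ξc : Fin n → Zc := fun i => ⟨ξ i, hcen2 _ (hξdeg i)⟩ with hξcdef
  -- the algebra endomorphisms
  have hcommute : ∀ (w : Fin n → Zc) (x : MvPolynomial (Fin n) (ZMod p)) (y : C),
      Commute (mk w x) (C.val y) :=
    fun w x y => ((Subalgebra.mem_center_iff.mp (hmk_center w x)) _).symm
  set Φ := Algebra.TensorProduct.lift (mk ηc) C.val (hcommute ηc) with hΦdef
  set Ψ : A →ₐ[ZMod p] A := Φ.comp e.symm.toAlgHom with hΨdef
  set Φ' := Algebra.TensorProduct.lift (mk ξc) C.val (hcommute ξc) with hΦ'def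
  set Ψ' : A →ₐ[ZMod p] A := Φ'.comp e.symm.toAlgHom with hΨ'def
  have hesymmζ : ∀ i, e.symm (ζ i) = (MvPolynomial.X i) ⊗ₜ[ZMod p] (1 : C) := by
    intro i; rw [hζ i, AlgEquiv.symm_apply_apply]
  have hesymmc : ∀ c : C,
      e.symm ↑c = (1 : MvPolynomial (Fin n) (ZMod p)) ⊗ₜ[ZMod p] c := by
    intro c; rw [← he c, AlgEquiv.symm_apply_apply]
  have hΨζ : ∀ i, Ψ (ζ i) = η i := by
    intro i
    show Φ (e.symm (ζ i)) = η i
    rw [hesymmζ i, hΦdef, Algebra.TensorProduct.lift_tmul, hmkX, map_one, mul_one]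
  have hΨmem : ∀ x ∈ C, Ψ x = x := by
    intro x hx
    show Φ (e.symm ↑(⟨x, hx⟩ : C)) = x
    rw [hesymmc ⟨x, hx⟩, hΦdef, Algebra.TensorProduct.lift_tmul, map_one, one_mul]
    rfl
  have hΨ'ζ : ∀ i, Ψ' (ζ i) = ξ i := by
    intro i
    show Φ' (e.symm (ζ i)) = ξ i
    rw [hesymmζ i, hΦ'def, Algebra.TensorProduct.lift_tmul, hmkX, map_one, mul_one]
  have hΨ'mem : ∀ x ∈ C, Ψ' x = x := by
    intro x hx
    show Φ' (e.symm ↑(⟨x, hx⟩ : C)) = x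
    rw [hesymmc ⟨x, hx⟩, hΦ'def, Algebra.TensorProduct.lift_tmul, map_one, one_mul]
    rfl
  have hΨ'Z : ∀ v, Ψ' (Z v) = W (g.symm v) := by
    intro v
    have hcomp : (Ψ'.toLinearMap ∘ₗ Z) =
        (W ∘ₗ (g.symm : _ ≃ₗ[ZMod p] _).toLinearMap) := by
      apply Module.Basis.ext bB
      intro i
      simp only [LinearMap.comp_apply, LinearEquiv.coe_coe]
      rw [hZb i]
      exact hΨ'ζ i
    exact DFunLike.congr_fun hcomp v
  have hΨW : ∀ v, Ψ (W v) = Z (g v) := by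
    intro v
    have hcomp : (Ψ.toLinearMap ∘ₗ W) =
        (Z ∘ₗ (g : _ ≃ₗ[ZMod p] _).toLinearMap) := by
      apply Module.Basis.ext bB
      intro i
      simp only [LinearMap.comp_apply, LinearEquiv.coe_coe]
      rw [hWb i]
      show Ψ (ζ i - cf i) = Z (g (bB i))
      rw [map_sub, hΨζ i, hΨmem (cf i) (hcf i).1, hgb i, ← hseq i, ← hscf i,
        add_sub_cancel_right]
    exact DFunLike.congr_fun hcomp v
  have hΨξ : ∀ i, Ψ (ξ i) = ζ i := by
    intro i
    show Ψ (W (g.symm (bB i))) = ζ i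
    rw [hΨW, g.apply_symm_apply, hZb i]
  have hΨ'η : ∀ i, Ψ' (η i) = ζ i := by
    intro i
    rw [← hscf i, map_add, hseq i, hΨ'Z, hΨ'mem (cf i) (hcf i).1]
    have hgs : g.symm (uu i) = bB i := by
      rw [← hgb i, g.symm_apply_apply]
    rw [hgs, hWb i, sub_add_cancel]
  -- `A` is generated by the `ζ i` and `C`
  have hadj : Algebra.adjoin (ZMod p) (Set.range ζ ∪ (C : Set A)) = ⊤ := by
    rw [eq_top_iff]
    rintro a -
    obtain ⟨t, rfl⟩ := e.surjective a
    induction t using TensorProduct.induction_on with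
    | zero => rw [map_zero]; exact Subalgebra.zero_mem _
    | add x y hx hy => rw [map_add]; exact Subalgebra.add_mem _ hx hy
    | tmul q c =>
      rw [hePQ q c]
      refine Subalgebra.mul_mem _ ?_ (Algebra.subset_adjoin (Or.inr c.2))
      induction q using MvPolynomial.induction_on with
      | C r =>
        have hcr : mk ζc (MvPolynomial.C r) = algebraMap (ZMod p) A r := by
          simp [hmkdef]
        rw [hcr]
        exact Subalgebra.algebraMap_mem _ r
      | add p1 p2 h1 h2 => rw [map_add]; exact Subalgebra.add_mem _ h1 h2
      | mul_X p1 i h1 =>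
        rw [map_mul, hmkX]
        exact Subalgebra.mul_mem _ h1 (Algebra.subset_adjoin (Or.inl ⟨i, rfl⟩))
  have hcomp1 : Ψ.comp Ψ' = AlgHom.id (ZMod p) A := by
    refine AlgHom.ext_of_adjoin_eq_top hadj ?_
    rintro x (⟨i, rfl⟩ | hx)
    · show Ψ (Ψ' (ζ i)) = ζ i
      rw [hΨ'ζ i, hΨξ i]
    · show Ψ (Ψ' x) = x
      rw [hΨ'mem x hx, hΨmem x hx]
  have hcomp2 : Ψ'.comp Ψ = AlgHom.id (ZMod p) A := by
    refine AlgHom.ext_of_adjoin_eq_top hadj ?_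
    rintro x (⟨i, rfl⟩ | hx)
    · show Ψ' (Ψ (ζ i)) = ζ i
      rw [hΨζ i, hΨ'η i]
    · show Ψ' (Ψ x) = x
      rw [hΨmem x hx, hΨ'mem x hx]
  have hΨΨ'x : ∀ x, Ψ (Ψ' x) = x := fun x => DFunLike.congr_fun hcomp1 x
  have hΨ'Ψx : ∀ x, Ψ' (Ψ x) = x := fun x => DFunLike.congr_fun hcomp2 x
  set ΨA : A ≃ₐ[ZMod p] A := AlgEquiv.ofAlgHom Ψ Ψ' hcomp1 hcomp2 with hΨAdef
  -- grading is preserved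
  have hmapleη : ∀ k, Submodule.map Ψ.toLinearMap (𝒜 k) ≤ 𝒜 k := by
    intro k
    conv_lhs => rw [hgr k]
    rw [hS'def, Submodule.map_span, Submodule.span_le]
    rintro _ ⟨x, ⟨m, j, c, hcC, hcj, hk, rfl⟩, rfl⟩
    have hcompmk : Ψ.comp (mk ζc) = mk ηc := by
      apply MvPolynomial.algHom_ext
      intro i
      rw [AlgHom.comp_apply, hmkX, hmkX]
      exact hΨζ i
    have h1 : Ψ.toLinearMap (Pm ζc m * c) = Pm ηc m * c := by
      show Ψ (Pm ζc m * c) = Pm ηc m * c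
      rw [map_mul, hΨmem c hcC, hPmdef]
      exact congrArg (· * c) (DFunLike.congr_fun hcompmk (MvPolynomial.monomial m 1))
    rw [h1, ← hk]
    exact SetLike.mul_mem_graded (hPmdeg ηc (fun i => hηdeg i) m) hcj
  have hmapleξ : ∀ k, Submodule.map Ψ'.toLinearMap (𝒜 k) ≤ 𝒜 k := by
    intro k
    conv_lhs => rw [hgr k]
    rw [hS'def, Submodule.map_span, Submodule.span_le]
    rintro _ ⟨x, ⟨m, j, c, hcC, hcj, hk, rfl⟩, rfl⟩
    have hcompmk : Ψ'.comp (mk ζc) = mk ξc := by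
      apply MvPolynomial.algHom_ext
      intro i
      rw [AlgHom.comp_apply, hmkX, hmkX]
      exact hΨ'ζ i
    have h1 : Ψ'.toLinearMap (Pm ζc m * c) = Pm ξc m * c := by
      show Ψ' (Pm ζc m * c) = Pm ξc m * c
      rw [map_mul, hΨ'mem c hcC, hPmdef]
      exact congrArg (· * c) (DFunLike.congr_fun hcompmk (MvPolynomial.monomial m 1))
    rw [h1, ← hk]
    exact SetLike.mul_mem_graded (hPmdeg ξc (fun i => hξdeg i) m) hcj
  have hΨAl : ΨA.toLinearMap = Ψ.toLinearMap := LinearMap.ext fun x => rfl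
  have hmapgrade : ∀ k, Submodule.map ΨA.toLinearMap (𝒜 k) = 𝒜 k := by
    intro k
    rw [hΨAl]
    refine le_antisymm (hmapleη k) ?_
    intro x hx
    exact ⟨Ψ' x, hmapleξ k ⟨x, hx, rfl⟩, hΨΨ'x x⟩
  -- ideals
  have hIζη : ∀ y ∈ Ideal.span (Set.range ζ), Ψ y ∈ Ideal.span (Set.range η) := by
    intro y hy
    refine Submodule.span_induction ?_ ?_ ?_ ?_ hy
    · rintro x ⟨i, rfl⟩
      rw [hΨζ i]
      exact Ideal.subset_span ⟨i, rfl⟩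
    · rw [map_zero]; exact Ideal.zero_mem _
    · intro x y _ _ hx hy
      rw [map_add]; exact Ideal.add_mem _ hx hy
    · intro a x _ hx
      rw [smul_eq_mul, map_mul]
      exact Ideal.mul_mem_left _ _ hx
  have hIηζ : ∀ y ∈ Ideal.span (Set.range η), Ψ' y ∈ Ideal.span (Set.range ζ) := by
    intro y hy
    refine Submodule.span_induction ?_ ?_ ?_ ?_ hy
    · rintro x ⟨i, rfl⟩
      rw [hΨ'η i]
      exact Ideal.subset_span ⟨i, rfl⟩
    · rw [map_zero]; exact Ideal.zero_mem _
    · intro x y _ _ hx hy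
      rw [map_add]; exact Ideal.add_mem _ hx hy
    · intro a x _ hx
      rw [smul_eq_mul, map_mul]
      exact Ideal.mul_mem_left _ _ hx
  have hmapideal : Submodule.map ΨA.toLinearMap
      (Submodule.restrictScalars (ZMod p) (Ideal.span (Set.range ζ)))
      = Submodule.restrictScalars (ZMod p) (Ideal.span (Set.range η)) := by
    rw [hΨAl]
    apply le_antisymm
    · rintro _ ⟨y, hy, rfl⟩
      simp only [Submodule.restrictScalars_mem] at hy ⊢
      exact hIζη y hy
    · intro x hx
      simp only [Submodule.restrictScalars_mem] at hx
      exact ⟨Ψ' x, by simpa using hIηζ x hx, hΨΨ'x x⟩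
  -- the new tensor decomposition
  set e' := e.trans ΨA with he'def
  have he'1 : ∀ c : C, e' ((1 : MvPolynomial (Fin n) (ZMod p)) ⊗ₜ[ZMod p] c) = ↑c := by
    intro c
    show ΨA (e ((1 : MvPolynomial (Fin n) (ZMod p)) ⊗ₜ[ZMod p] c)) = ↑c
    rw [he c]
    exact hΨmem _ c.2
  have he'2 : ∀ i, e' ((MvPolynomial.X i) ⊗ₜ[ZMod p] (1 : C)) = η i := by
    intro i
    show ΨA (e ((MvPolynomial.X i) ⊗ₜ[ZMod p] (1 : C))) = η i
    rw [← hζ i]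
    exact hΨζ i
  -- quotient computation
  set JX : Ideal (MvPolynomial (Fin n) (ZMod p) ⊗[ZMod p] C) := Ideal.span
    (Set.range fun i => (MvPolynomial.X i) ⊗ₜ[ZMod p] (1 : C)) with hJXdef
  have he'symmη : ∀ i, e'.symm (η i) = (MvPolynomial.X i) ⊗ₜ[ZMod p] (1 : C) := by
    intro i
    rw [← he'2 i, AlgEquiv.symm_apply_apply]
  have hIηX : ∀ y ∈ Ideal.span (Set.range η), e'.symm y ∈ JX := by
    intro y hy
    refine Submodule.span_induction ?_ ?_ ?_ ?_ hy
    · rintro x ⟨i, rfl⟩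
      rw [he'symmη i]
      exact Ideal.subset_span ⟨i, rfl⟩
    · rw [map_zero]; exact Ideal.zero_mem _
    · intro x y _ _ hx hy
      rw [map_add]; exact Ideal.add_mem _ hx hy
    · intro a x _ hx
      rw [smul_eq_mul, map_mul]
      exact Ideal.mul_mem_left _ _ hx
  have hIXη : ∀ y ∈ JX, e' y ∈ Ideal.span (Set.range η) := by
    intro y hy
    refine Submodule.span_induction ?_ ?_ ?_ ?_ hy
    · rintro x ⟨i, rfl⟩
      rw [he'2 i]
      exact Ideal.subset_span ⟨i, rfl⟩
    · rw [map_zero]; exact Ideal.zero_mem _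
    · intro x y _ _ hx hy
      rw [map_add]; exact Ideal.add_mem _ hx hy
    · intro a x _ hx
      rw [smul_eq_mul, map_mul]
      exact Ideal.mul_mem_left _ _ hx
  have hmapJ : (Submodule.restrictScalars (ZMod p) (Ideal.span (Set.range η))).map
      e'.symm.toLinearEquiv.toLinearMap = Submodule.restrictScalars (ZMod p) JX := by
    apply le_antisymm
    · rintro _ ⟨y, hy, rfl⟩
      simp only [Submodule.restrictScalars_mem] at hy ⊢
      exact hIηX y hy
    · intro x hx
      simp only [Submodule.restrictScalars_mem] at hx
      refine ⟨e' x, by simpa using hIXη x hx, ?_⟩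
      show e'.symm (e' x) = x
      rw [AlgEquiv.symm_apply_apply]
  -- `T ⧸ JX ≃ C`
  set ev0 : MvPolynomial (Fin n) (ZMod p) →ₐ[ZMod p] ZMod p :=
    MvPolynomial.aeval (fun _ => 0) with hev0def
  set qP : MvPolynomial (Fin n) (ZMod p) →ₐ[ZMod p] C :=
    (Algebra.ofId (ZMod p) C).comp ev0 with hqPdef
  have hqPalg : ∀ a, qP a = algebraMap (ZMod p) C (ev0 a) := fun a => rfl
  set qT : (MvPolynomial (Fin n) (ZMod p) ⊗[ZMod p] C) →ₐ[ZMod p] C :=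
    Algebra.TensorProduct.lift qP (AlgHom.id _ _) (fun x y => by
      rw [hqPalg x]
      exact Algebra.commutes (ev0 x) ((AlgHom.id (ZMod p) C) y)) with hqTdef
  have hqT1 : ∀ c : C, qT ((1 : MvPolynomial (Fin n) (ZMod p)) ⊗ₜ[ZMod p] c) = c := by
    intro c
    rw [hqTdef, Algebra.TensorProduct.lift_tmul, map_one, one_mul]
    rfl
  have hqTtmul : ∀ (a : MvPolynomial (Fin n) (ZMod p)) (c : C),
      qT (a ⊗ₜ[ZMod p] c) = ev0 a • c := by
    intro a c
    rw [hqTdef, Algebra.TensorProduct.lift_tmul, hqPalg, ← Algebra.smul_def]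
    rfl
  have hqTX : ∀ i, qT ((MvPolynomial.X i) ⊗ₜ[ZMod p] (1 : C)) = 0 := by
    intro i
    rw [hqTtmul]
    simp [hev0def]
  have hkerJ : Submodule.restrictScalars (ZMod p) JX ≤ LinearMap.ker qT.toLinearMap := by
    intro x hx
    simp only [Submodule.restrictScalars_mem] at hx
    rw [LinearMap.mem_ker]
    refine Submodule.span_induction ?_ ?_ ?_ ?_ hx
    · rintro y ⟨i, rfl⟩
      exact hqTX i
    · exact map_zero _
    · intro x y _ _ hx hy
      show qT (x + y) = 0
      rw [map_add]
      show qT x + qT y = 0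
      rw [show qT x = 0 from hx, show qT y = 0 from hy, add_zero]
    · intro a x _ hx
      show qT (a • x) = 0
      rw [smul_eq_mul, map_mul, show qT x = 0 from hx, mul_zero]
  set qbar := Submodule.liftQ (Submodule.restrictScalars (ZMod p) JX) qT.toLinearMap hkerJ
    with hqbardef
  set ℓ : C →ₗ[ZMod p] ((MvPolynomial (Fin n) (ZMod p) ⊗[ZMod p] C) ⧸
      Submodule.restrictScalars (ZMod p) JX) :=
    (Submodule.restrictScalars (ZMod p) JX).mkQ ∘ₗ
      (Algebra.TensorProduct.includeRight :
        C →ₐ[ZMod p] MvPolynomial (Fin n) (ZMod p) ⊗[ZMod p] C).toLinearMap with hℓdef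
  have haux : ∀ a : MvPolynomial (Fin n) (ZMod p),
      a - MvPolynomial.C (ev0 a) ∈
        Ideal.span (Set.range (MvPolynomial.X : Fin n → MvPolynomial (Fin n) (ZMod p))) := by
    intro a
    induction a using MvPolynomial.induction_on with
    | C r =>
      have : ev0 (MvPolynomial.C r) = r := by simp [hev0def]
      rw [this, sub_self]
      exact Ideal.zero_mem _
    | add p1 p2 h1 h2 =>
      have : p1 + p2 - MvPolynomial.C (ev0 (p1 + p2)) =
          (p1 - MvPolynomial.C (ev0 p1)) + (p2 - MvPolynomial.C (ev0 p2)) := by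
        rw [map_add, map_add]
        ring
      rw [this]
      exact Ideal.add_mem _ h1 h2
    | mul_X p1 i h1 =>
      have : ev0 (p1 * MvPolynomial.X i) = 0 := by
        rw [map_mul]
        simp [hev0def]
      rw [this, map_zero, sub_zero]
      exact Ideal.mul_mem_left _ _ (Ideal.subset_span ⟨i, rfl⟩)
  have htensor : ∀ a ∈ Ideal.span
      (Set.range (MvPolynomial.X : Fin n → MvPolynomial (Fin n) (ZMod p))),
      ∀ c : C, (a ⊗ₜ[ZMod p] c :
        MvPolynomial (Fin n) (ZMod p) ⊗[ZMod p] C) ∈ JX := by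
    intro a ha c
    refine Submodule.span_induction ?_ ?_ ?_ ?_ ha
    · rintro x ⟨i, rfl⟩
      have : ((MvPolynomial.X i : MvPolynomial (Fin n) (ZMod p)) ⊗ₜ[ZMod p] c :
          MvPolynomial (Fin n) (ZMod p) ⊗[ZMod p] C) =
          ((1 : MvPolynomial (Fin n) (ZMod p)) ⊗ₜ[ZMod p] c) *
            ((MvPolynomial.X i) ⊗ₜ[ZMod p] (1 : C)) := by
        rw [Algebra.TensorProduct.tmul_mul_tmul, one_mul, mul_one]
      rw [this]
      exact Ideal.mul_mem_left _ _ (Ideal.subset_span ⟨i, rfl⟩)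
    · rw [TensorProduct.zero_tmul]
      exact Ideal.zero_mem _
    · intro x y _ _ hx hy
      rw [TensorProduct.add_tmul]
      exact Ideal.add_mem _ hx hy
    · intro r x _ hx
      rw [smul_eq_mul]
      have : ((r * x : MvPolynomial (Fin n) (ZMod p)) ⊗ₜ[ZMod p] c :
          MvPolynomial (Fin n) (ZMod p) ⊗[ZMod p] C) =
          (r ⊗ₜ[ZMod p] (1 : C)) * (x ⊗ₜ[ZMod p] c) := by
        rw [Algebra.TensorProduct.tmul_mul_tmul, one_mul]
      rw [this]
      exact Ideal.mul_mem_left _ _ hx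
  have hmkq : ∀ t : MvPolynomial (Fin n) (ZMod p) ⊗[ZMod p] C,
      (Submodule.restrictScalars (ZMod p) JX).mkQ
        ((1 : MvPolynomial (Fin n) (ZMod p)) ⊗ₜ[ZMod p] (qT t)) =
      (Submodule.restrictScalars (ZMod p) JX).mkQ t := by
    intro t
    induction t using TensorProduct.induction_on with
    | zero => rw [map_zero, TensorProduct.tmul_zero]
    | tmul a c =>
      rw [hqTtmul]
      rw [Submodule.mkQ_apply, Submodule.mkQ_apply, Submodule.Quotient.eq]
      have hrw : ((1 : MvPolynomial (Fin n) (ZMod p)) ⊗ₜ[ZMod p] (ev0 a • c) :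
          MvPolynomial (Fin n) (ZMod p) ⊗[ZMod p] C) - a ⊗ₜ[ZMod p] c =
          -((a - MvPolynomial.C (ev0 a)) ⊗ₜ[ZMod p] c) := by
        have h1 : ((1 : MvPolynomial (Fin n) (ZMod p)) ⊗ₜ[ZMod p] (ev0 a • c) :
            MvPolynomial (Fin n) (ZMod p) ⊗[ZMod p] C) =
            (MvPolynomial.C (ev0 a)) ⊗ₜ[ZMod p] c := by
          rw [TensorProduct.tmul_smul, TensorProduct.smul_tmul', MvPolynomial.smul_eq_C_mul,
            mul_one]
        rw [h1, TensorProduct.sub_tmul]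
        abel
      rw [hrw]
      exact Submodule.neg_mem _ (htensor _ (haux a) c)
    | add x y hx hy =>
      have h1 : qT (x + y) = qT x + qT y := map_add qT x y
      rw [h1, TensorProduct.tmul_add]
      have h2 := (Submodule.restrictScalars (ZMod p) JX).mkQ.map_add
        ((1 : MvPolynomial (Fin n) (ZMod p)) ⊗ₜ[ZMod p] (qT x))
        ((1 : MvPolynomial (Fin n) (ZMod p)) ⊗ₜ[ZMod p] (qT y))
      rw [h2, hx, hy, ← (Submodule.restrictScalars (ZMod p) JX).mkQ.map_add]
  have hqℓ : ∀ c : C, qbar (ℓ c) = c := by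
    intro c
    rw [hℓdef]
    show qbar ((Submodule.restrictScalars (ZMod p) JX).mkQ
      ((1 : MvPolynomial (Fin n) (ZMod p)) ⊗ₜ[ZMod p] c)) = c
    rw [hqbardef, Submodule.mkQ_apply, Submodule.liftQ_apply]
    exact hqT1 c
  have hℓq : ∀ x, ℓ (qbar x) = x := by
    intro x
    obtain ⟨t, rfl⟩ := Submodule.mkQ_surjective _ x
    rw [hqbardef, Submodule.mkQ_apply, Submodule.liftQ_apply]
    show (Submodule.restrictScalars (ZMod p) JX).mkQ
      ((1 : MvPolynomial (Fin n) (ZMod p)) ⊗ₜ[ZMod p] (qT t)) = _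
    rw [hmkq t]
    rfl
  set eqTC : ((MvPolynomial (Fin n) (ZMod p) ⊗[ZMod p] C) ⧸
      Submodule.restrictScalars (ZMod p) JX) ≃ₗ[ZMod p] C :=
    LinearEquiv.ofLinear qbar ℓ (LinearMap.ext hqℓ) (LinearMap.ext hℓq) with heqTCdef
  -- assemble everything
  refine ⟨⟨ΨA, hmapgrade, hmapideal⟩, ?_, ⟨e', he'1, he'2⟩⟩
  exact ⟨(Submodule.Quotient.equiv _ _ e'.symm.toLinearEquiv hmapJ).trans eqTC⟩
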